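/- Let E ∈ {0,1}^{n_r×n_c} be the biadjacency matrix of a (d_r,d_c)-biregular bipartite graph (every row of E sums to d_r and every column sums to d_c), and let M ⊆ [n_r]×[n_c] be a set of prohibited edges such that for each i the set {j : (i,j) ∈ M} has at most p elements and for each j the set {i : (i,j) ∈ M} has at most p elements. Let θ_c be the maximum inner product between two distinct columns of E. If 2p ≤ n_c − d_r and 2p − 1 ≤ d_c − θ_c, then there exists a matrix E_p ∈ {0,1}^{n_r×n_c} such that every row of E_p sums to d_r, every column of E_p sums to d_c, and E_p(i,j) = 0 for every (i,j) ∈ M. -/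

import Mathlib

/-- Key min-cut arithmetic inequality, over the reals. -/
lemma cut_arith (p dr dc nr nc a c m : ℝ)
    (hp : 1 ≤ p) (hdr : 1 ≤ dr) (hdc : 2*p - 1 ≤ dc)
    (hnc : dr + 2*p ≤ nc) (hsize : nr * dr = nc * dc)
    (hstar : (2*p - 1) * (nc - 1) ≤ dc * (nc - dr))
    (ha0 : 0 ≤ a) (ha : a ≤ nr) (hc0 : 0 ≤ c) (hc : c ≤ nc)
    (hm0 : 0 ≤ m) (hm1 : m ≤ p * a) (hm2 : m ≤ p * c) (hm3 : m ≤ a * c) :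
    dr * a + m ≤ a * c + dc * (nc - c) := by
  have hdc0 : (1:ℝ) ≤ dc := by nlinarith
  have hnrdc : dc + p ≤ nr := by
    have h1 : (2*p-1) * dr ≤ (2*p-1) * (nc - 1) := by nlinarith
    have h2 : p * dr ≤ (2*p - 1) * dr := by nlinarith
    have : dr * (dc + p) ≤ dr * nr := by nlinarith
    nlinarith
  rcases le_or_gt (dr + p) c with h | h
  · -- c ≥ dr + p
    nlinarith [mul_nonneg (sub_nonneg.2 hc) (le_trans (by linarith) hdc0 : (0:ℝ) ≤ dc)]
  rcases le_or_gt a dc with h2 | h2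
  · -- a ≤ dc
    nlinarith
  rcases le_or_gt c dr with h3 | h3
  · -- a ≥ dc, c ≤ dr
    nlinarith
  · -- a ≥ dc, dr < c < dr + p
    nlinarith

open Finset

theorem gadget_hall (nr nc dr dc : ℕ) (M : Finset (Fin nr × Fin nc))
    (hcut : ∀ (A : Finset (Fin nr)) (B : Finset (Fin nc)),
      dr * A.card ≤ dc * B.card + ((A ×ˢ Bᶜ).filter (fun e => e ∉ M)).card)
    (t : (Fin nr × Fin dr) ⊕ (Fin nr × Fin nc) → Finset ((Fin nc × Fin dc) ⊕ (Fin nr × Fin nc)))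
    (ht : t = fun x =>
      Sum.elim
        (fun rs => (univ.filter (fun j => (rs.1, j) ∉ M)).image (fun j => Sum.inr (rs.1, j)))
        (fun cell =>
          if cell ∈ M then {Sum.inr cell}
          else insert (Sum.inr cell) ((univ : Finset (Fin dc)).image (fun s => Sum.inl (cell.2, s))))
        x)
    (S : Finset ((Fin nr × Fin dr) ⊕ (Fin nr × Fin nc))) :
    S.card ≤ (S.biUnion t).card := by
  classical
  set S1 : Finset (Fin nr × Fin dr) := univ.filter (fun rs => Sum.inl rs ∈ S) with hS1
  set S2 : Finset (Fin nr × Fin nc) := univ.filter (fun cell => Sum.inr cell ∈ S) with hS2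
  have hSdecomp : S = S1.image Sum.inl ∪ S2.image Sum.inr := by
    ext x
    cases x <;> simp [hS1, hS2]
  have hcardS : S.card = S1.card + S2.card := by
    rw [hSdecomp, card_union_of_disjoint, card_image_of_injective _ Sum.inl_injective,
      card_image_of_injective _ Sum.inr_injective]
    simp [Finset.disjoint_left]
  set A : Finset (Fin nr) := S1.image Prod.fst with hA
  set B : Finset (Fin nc) := (S2.filter (fun e => e ∉ M)).image Prod.snd with hB
  set allowedA : Finset (Fin nr × Fin nc) :=
    (A ×ˢ (univ : Finset (Fin nc))).filter (fun e => e ∉ M) with hallowedA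
  set W : Finset (Fin nr × Fin nc) := allowedA ∪ S2 with hW
  set N := S.biUnion t with hN
  -- membership facts about N
  have hNr : ∀ e ∈ W, (Sum.inr e : (Fin nc × Fin dc) ⊕ (Fin nr × Fin nc)) ∈ N := by
    intro e he
    rw [hW, mem_union] at he
    rcases he with he | he
    · rw [hallowedA, mem_filter, mem_product] at he
      obtain ⟨⟨hA1, _⟩, hM⟩ := he
      rw [hA, mem_image] at hA1
      obtain ⟨rs, hrs, hfst⟩ := hA1
      rw [hN, mem_biUnion]
      refine ⟨Sum.inl rs, ?_, ?_⟩
      · rw [hS1, mem_filter] at hrs; exact hrs.2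
      · rw [ht]
        simp only [Sum.elim_inl, mem_image, mem_filter, mem_univ, true_and]
        exact ⟨e.2, by rw [hfst]; exact hM, by rw [hfst]⟩
    · rw [hS2, mem_filter] at he
      rw [hN, mem_biUnion]
      refine ⟨Sum.inr e, he.2, ?_⟩
      rw [ht]
      simp only [Sum.elim_inr]
      split
      · exact mem_singleton_self _
      · exact mem_insert_self _ _
  have hNl : ∀ x ∈ B ×ˢ (univ : Finset (Fin dc)),
      (Sum.inl x : (Fin nc × Fin dc) ⊕ (Fin nr × Fin nc)) ∈ N := by
    intro x hx
    rw [mem_product] at hx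
    obtain ⟨hx1, _⟩ := hx
    rw [hB, mem_image] at hx1
    obtain ⟨e, he, hsnd⟩ := hx1
    rw [mem_filter] at he
    obtain ⟨he2, heM⟩ := he
    rw [hS2, mem_filter] at he2
    rw [hN, mem_biUnion]
    refine ⟨Sum.inr e, he2.2, ?_⟩
    rw [ht]
    simp only [Sum.elim_inr, if_neg heM]
    refine mem_insert_of_mem ?_
    rw [mem_image]
    exact ⟨x.2, mem_univ _, by rw [hsnd]⟩
  -- lower bound on N
  have hNcard : W.card + dc * B.card ≤ N.card := by
    have hsub : W.image Sum.inr ∪ (B ×ˢ (univ : Finset (Fin dc))).image Sum.inl ⊆ N := by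
      intro x hx
      rw [mem_union] at hx
      rcases hx with hx | hx
      · rw [mem_image] at hx; obtain ⟨e, he, rfl⟩ := hx; exact hNr e he
      · rw [mem_image] at hx; obtain ⟨e, he, rfl⟩ := hx; exact hNl e he
    have h1 : (W.image (Sum.inr : (Fin nr × Fin nc) → (Fin nc × Fin dc) ⊕ (Fin nr × Fin nc))).card = W.card :=
      card_image_of_injective _ Sum.inr_injective
    have h2 : ((B ×ˢ (univ : Finset (Fin dc))).image
        (Sum.inl : (Fin nc × Fin dc) → (Fin nc × Fin dc) ⊕ (Fin nr × Fin nc))).card = dc * B.card := by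
      rw [card_image_of_injective _ Sum.inl_injective, card_product, card_univ,
        Fintype.card_fin, Nat.mul_comm]
    have hdisj : Disjoint (W.image Sum.inr) ((B ×ˢ (univ : Finset (Fin dc))).image Sum.inl) := by
      simp [Finset.disjoint_left]
    have h3 := card_union_of_disjoint hdisj
    have h4 : W.card + dc * B.card
        = (W.image Sum.inr ∪ (B ×ˢ (univ : Finset (Fin dc))).image Sum.inl).card := by
      rw [h3, h1, h2]
    exact h4.le.trans (card_le_card hsub)
  -- upper bounds on S pieces
  have hS1card : S1.card ≤ dr * A.card := by
    have hsub : S1 ⊆ A ×ˢ (univ : Finset (Fin dr)) := by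
      intro rs hrs
      rw [mem_product]
      exact ⟨mem_image_of_mem _ hrs, mem_univ _⟩
    calc S1.card ≤ (A ×ˢ (univ : Finset (Fin dr))).card := card_le_card hsub
      _ = dr * A.card := by rw [card_product, card_univ, Fintype.card_fin, Nat.mul_comm]
  have hS2split : S2.card = (S2.filter (fun e => e ∈ allowedA)).card
      + (S2.filter (fun e => e ∉ allowedA)).card := (card_filter_add_card_filter_not _).symm
  have hWcard : W.card = allowedA.card + (S2.filter (fun e => e ∉ allowedA)).card := by
    have heq : W = allowedA ∪ S2.filter (fun e => e ∉ allowedA) := by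
      rw [hW]; ext e; simp only [mem_union, mem_filter]; tauto
    have hdisj : Disjoint allowedA (S2.filter (fun e => e ∉ allowedA)) := by
      simp only [Finset.disjoint_left, mem_filter]
      tauto
    rw [heq, card_union_of_disjoint hdisj]
  have hS2in : (S2.filter (fun e => e ∈ allowedA)).card
      ≤ ((A ×ˢ B).filter (fun e => e ∉ M)).card := by
    apply card_le_card
    intro e he
    simp only [mem_filter] at he
    obtain ⟨heS2, heA⟩ := he
    have h5 := heA
    rw [hallowedA, mem_filter, mem_product] at h5
    have heB : e.2 ∈ B := by
      rw [hB]
      apply mem_image_of_mem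
      rw [mem_filter]
      exact ⟨heS2, h5.2⟩
    simp only [mem_filter, mem_product]
    exact ⟨⟨h5.1.1, heB⟩, h5.2⟩
  have hAsplit : allowedA.card = ((A ×ˢ B).filter (fun e => e ∉ M)).card
      + ((A ×ˢ Bᶜ).filter (fun e => e ∉ M)).card := by
    have hdisj : Disjoint ((A ×ˢ B).filter (fun e => e ∉ M))
        ((A ×ˢ Bᶜ).filter (fun e => e ∉ M)) := by
      simp only [Finset.disjoint_left, mem_filter, mem_product, mem_compl]
      rintro e ⟨⟨_, h1⟩, _⟩ ⟨⟨_, h2⟩, _⟩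
      exact h2 h1
    rw [← card_union_of_disjoint hdisj]
    congr 1
    rw [hallowedA]
    ext e
    simp only [mem_filter, mem_product, mem_union, mem_compl, mem_univ, and_true, true_and]
    constructor
    · intro ⟨h1, h2⟩
      by_cases hb : e.2 ∈ B
      · exact Or.inl ⟨⟨h1, hb⟩, h2⟩
      · exact Or.inr ⟨⟨h1, hb⟩, h2⟩
    · rintro (⟨⟨h1, _⟩, h2⟩ | ⟨⟨h1, _⟩, h2⟩) <;> exact ⟨h1, h2⟩
  have hc := hcut A B
  omega

theorem exists_matrix_of_cut (nr nc dr dc : ℕ) (M : Finset (Fin nr × Fin nc))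
    (hsize : nr * dr = nc * dc)
    (hcut : ∀ (A : Finset (Fin nr)) (B : Finset (Fin nc)),
      dr * A.card ≤ dc * B.card + ((A ×ˢ Bᶜ).filter (fun e => e ∉ M)).card) :
    ∃ Ep : Matrix (Fin nr) (Fin nc) ℝ,
      (∀ i j, Ep i j = 0 ∨ Ep i j = 1) ∧
      (∀ i, ∑ j, Ep i j = dr) ∧ (∀ j, ∑ i, Ep i j = dc) ∧
      ∀ e ∈ M, Ep e.1 e.2 = 0 := by
  classical
  set t : (Fin nr × Fin dr) ⊕ (Fin nr × Fin nc) → Finset ((Fin nc × Fin dc) ⊕ (Fin nr × Fin nc)) :=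
    fun x =>
      Sum.elim
        (fun rs => (univ.filter (fun j => (rs.1, j) ∉ M)).image (fun j => Sum.inr (rs.1, j)))
        (fun cell =>
          if cell ∈ M then {Sum.inr cell}
          else insert (Sum.inr cell) ((univ : Finset (Fin dc)).image (fun s => Sum.inl (cell.2, s))))
        x with ht
  have hall : ∀ S : Finset ((Fin nr × Fin dr) ⊕ (Fin nr × Fin nc)), S.card ≤ (S.biUnion t).card :=
    gadget_hall nr nc dr dc M hcut t ht
  obtain ⟨f, hfinj, hft⟩ := (Finset.all_card_le_biUnion_card_iff_exists_injective t).mp hall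
  have hcard : Fintype.card ((Fin nr × Fin dr) ⊕ (Fin nr × Fin nc))
      = Fintype.card ((Fin nc × Fin dc) ⊕ (Fin nr × Fin nc)) := by
    simp [Fintype.card_sum, Fintype.card_prod]
    omega
  have hfbij : Function.Bijective f :=
    (Fintype.bijective_iff_injective_and_card f).mpr ⟨hfinj, hcard⟩
  -- basic structure of t values
  have htRow : ∀ i s, ∃ j, (i, j) ∉ M ∧ f (Sum.inl (i, s)) = Sum.inr (i, j) := by
    intro i s
    have h := hft (Sum.inl (i, s))
    rw [ht] at h
    simp only [Sum.elim_inl, mem_image, mem_filter, mem_univ, true_and] at h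
    obtain ⟨j, hj, hj2⟩ := h
    exact ⟨j, hj, hj2.symm⟩
  -- P i j : the cell (i,j) is used
  set P : Fin nr → Fin nc → Prop := fun i j => (i, j) ∉ M ∧ ∃ s, f (Sum.inl (i, s)) = Sum.inr (i, j)
    with hP
  have hPdec : ∀ i j, Decidable (P i j) := fun i j => by rw [hP]; infer_instance
  -- what can map to a u-vertex inr (i,j):
  have huPre : ∀ (x) (i : Fin nr) (j : Fin nc), f x = Sum.inr (i, j) →
      x = Sum.inr (i, j) ∨ ∃ s, x = Sum.inl (i, s) := by
    intro x i j hx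
    have h := hft x
    rw [hx] at h
    rw [ht] at h
    match x with
    | Sum.inl rs =>
      simp only [Sum.elim_inl, mem_image, mem_filter, mem_univ, true_and] at h
      obtain ⟨j', _, hj'⟩ := h
      obtain ⟨h1, h2⟩ := Prod.mk.injEq .. ▸ (Sum.inr.injEq .. ▸ hj')
      right
      exact ⟨rs.2, by rw [← h1]⟩
    | Sum.inr cell =>
      simp only [Sum.elim_inr] at h
      left
      by_cases hM : cell ∈ M
      · rw [if_pos hM, mem_singleton] at h
        exact congrArg Sum.inr (Sum.inr_injective h).symm
      · rw [if_neg hM, mem_insert] at h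
        rcases h with h | h
        · exact congrArg Sum.inr (Sum.inr_injective h).symm
        · simp only [mem_image] at h
          obtain ⟨s, _, hs⟩ := h
          exact absurd hs (by simp)
  -- what can map to a column slot inl (j,s):
  have hcPre : ∀ (x) (j : Fin nc) (s : Fin dc), f x = Sum.inl (j, s) →
      ∃ i, (i, j) ∉ M ∧ x = Sum.inr (i, j) := by
    intro x j s hx
    have h := hft x
    rw [hx, ht] at h
    match x with
    | Sum.inl rs =>
      simp only [Sum.elim_inl, mem_image] at h
      obtain ⟨j', _, hj'⟩ := h
      exact absurd hj' (by simp)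
    | Sum.inr cell =>
      simp only [Sum.elim_inr] at h
      by_cases hM : cell ∈ M
      · rw [if_pos hM, mem_singleton] at h
        exact absurd h (by simp)
      · rw [if_neg hM, mem_insert] at h
        rcases h with h | h
        · exact absurd h (by simp)
        · simp only [mem_image, mem_univ, true_and] at h
          obtain ⟨s', hs'⟩ := h
          have : cell.2 = j := by
            have := (Sum.inl.injEq .. ▸ hs')
            exact (Prod.mk.injEq .. ▸ this).1
          refine ⟨cell.1, ?_, ?_⟩
          · rw [← this]; exact (by rwa [← Prod.mk.eta (p := cell)] at hM)
          · rw [← this, Prod.mk.eta]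
  -- P i j is also equivalent to a condition on f (Sum.inr (i,j))
  have hPiff : ∀ i j, P i j ↔ ((i, j) ∉ M ∧ ∃ s : Fin dc, f (Sum.inr (i, j)) = Sum.inl (j, s)) := by
    intro i j
    rw [hP]
    constructor
    · rintro ⟨hM, s, hs⟩
      refine ⟨hM, ?_⟩
      have h := hft (Sum.inr (i, j))
      rw [ht] at h
      simp only [Sum.elim_inr, if_neg hM, mem_insert] at h
      rcases h with h | h
      · exfalso
        have : (Sum.inl (i, s) : (Fin nr × Fin dr) ⊕ (Fin nr × Fin nc)) = Sum.inr (i, j) :=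
          hfinj (by rw [hs, h])
        simp at this
      · simp only [mem_image, mem_univ, true_and] at h
        obtain ⟨sc, hsc⟩ := h
        exact ⟨sc, hsc.symm⟩
    · rintro ⟨hM, s, hs⟩
      refine ⟨hM, ?_⟩
      obtain ⟨x, hx⟩ := hfbij.2 (Sum.inr (i, j))
      rcases huPre x i j hx with h | ⟨s', hs'⟩
      · exfalso
        rw [h] at hx
        rw [hx] at hs
        simp at hs
      · exact ⟨s', by rw [← hs']; exact hx⟩
  -- the matrix
  refine ⟨fun i j => if P i j then 1 else 0, ?_, ?_, ?_, ?_⟩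
  · intro i j
    by_cases h : P i j
    · right; simp only [if_pos h]
    · left; simp only [if_neg h]
  · -- row sums
    intro i
    have hsum : ∑ j, (if P i j then (1:ℝ) else 0)
        = ((univ : Finset (Fin nc)).filter (fun j => P i j)).card := by
      rw [Finset.sum_boole]
    rw [hsum]
    norm_cast
    rw [← Fintype.card_fin dr, ← card_univ]
    symm
    apply card_bij (fun (s : Fin dr) _ =>
      Sum.elim (fun cs => cs.1) (fun cell => cell.2) (f (Sum.inl (i, s))))
    · intro s _
      obtain ⟨j, hjM, hjf⟩ := htRow i s
      rw [hjf]
      simp only [Sum.elim_inr, mem_filter, mem_univ, true_and]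
      exact ⟨hjM, s, hjf⟩
    · intro a1 _ a2 _ hgeq
      obtain ⟨j1, _, hj1⟩ := htRow i a1
      obtain ⟨j2, _, hj2⟩ := htRow i a2
      rw [hj1, hj2] at hgeq
      simp only [Sum.elim_inr] at hgeq
      have heq2 : f (Sum.inl (i, a1)) = f (Sum.inl (i, a2)) := by rw [hj1, hj2, hgeq]
      simpa using hfinj heq2
    · intro j hj
      rw [mem_filter] at hj
      obtain ⟨_, hM, s, hs⟩ := hj
      exact ⟨s, mem_univ _, by rw [hs]; rfl⟩
  · -- column sums
    intro j
    have hsum : ∑ i, (if P i j then (1:ℝ) else 0)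
        = ((univ : Finset (Fin nr)).filter (fun i => P i j)).card := by
      rw [Finset.sum_boole]
    rw [hsum]
    norm_cast
    rw [← Fintype.card_fin dc, ← card_univ]
    symm
    set finv : (Fin nc × Fin dc) ⊕ (Fin nr × Fin nc) → (Fin nr × Fin dr) ⊕ (Fin nr × Fin nc) :=
      Function.surjInv hfbij.2 with hfinvdef
    have hfinv : ∀ y, f (finv y) = y := fun y => Function.surjInv_eq hfbij.2 y
    apply card_bij (fun (s : Fin dc) _ =>
      Sum.elim (fun rs => rs.1) (fun cell => cell.1) (finv (Sum.inl (j, s))))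
    · intro s _
      obtain ⟨i, hiM, hx⟩ := hcPre (finv (Sum.inl (j, s))) j s (hfinv _)
      rw [hx]
      simp only [Sum.elim_inr, mem_filter, mem_univ, true_and]
      rw [hPiff]
      refine ⟨hiM, s, ?_⟩
      rw [← hx]
      exact hfinv _
    · intro a1 _ a2 _ hgeq
      obtain ⟨i1, _, hx1⟩ := hcPre (finv (Sum.inl (j, a1))) j a1 (hfinv _)
      obtain ⟨i2, _, hx2⟩ := hcPre (finv (Sum.inl (j, a2))) j a2 (hfinv _)
      rw [hx1, hx2] at hgeq
      simp only [Sum.elim_inr] at hgeq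
      have heq2 : finv (Sum.inl (j, a1)) = finv (Sum.inl (j, a2)) := by rw [hx1, hx2, hgeq]
      have h2 : (Sum.inl (j, a1) : (Fin nc × Fin dc) ⊕ (Fin nr × Fin nc)) = Sum.inl (j, a2) := by
        rw [← hfinv (Sum.inl (j, a1)), ← hfinv (Sum.inl (j, a2)), heq2]
      simpa using h2
    · intro i hi
      rw [mem_filter] at hi
      obtain ⟨_, hPij⟩ := hi
      rw [hPiff] at hPij
      obtain ⟨hiM, s, hs⟩ := hPij
      refine ⟨s, mem_univ _, ?_⟩
      have : finv (Sum.inl (j, s)) = Sum.inr (i, j) := by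
        apply hfinj
        rw [hfinv, hs]
      rw [this]
      rfl
  · -- prohibited cells
    intro e he
    have : ¬ P e.1 e.2 := by
      rw [hP]
      rintro ⟨hM, _⟩
      exact hM (by rwa [Prod.mk.eta])
    simp [this]

/-- Lemma 7.2 of the paper: given a `(d_r,d_c)`-biregular 0-1 matrix `E` and a set `M`
of prohibited edges with at most `p` entries in each row and each column, if
`2p ≤ n_c - d_r` and `2p - 1 ≤ d_c - θ_c` (with `θ_c` the maximum inner product of two
distinct columns of `E`), then there is a `(d_r,d_c)`-biregular 0-1 matrix `E_p`
avoiding all prohibited edges. -/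
theorem exists_biregular_avoiding_prohibited (nr nc dr dc p : ℕ)
    (E : Matrix (Fin nr) (Fin nc) ℝ)
    (hE01 : ∀ i j, E i j = 0 ∨ E i j = 1)
    (hrow : ∀ i, ∑ j, E i j = dr) (hcol : ∀ j, ∑ i, E i j = dc)
    (M : Finset (Fin nr × Fin nc))
    (hMrow : ∀ i, (M.filter fun e => e.1 = i).card ≤ p)
    (hMcol : ∀ j, (M.filter fun e => e.2 = j).card ≤ p)
    (θc : ℝ) (hθc : ∀ j j' : Fin nc, j ≠ j' → ∑ i, E i j * E i j' ≤ θc)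
    (h1 : 2 * (p : ℝ) ≤ (nc : ℝ) - dr)
    (h2 : 2 * (p : ℝ) - 1 ≤ (dc : ℝ) - θc) :
    ∃ Ep : Matrix (Fin nr) (Fin nc) ℝ,
      (∀ i j, Ep i j = 0 ∨ Ep i j = 1) ∧
      (∀ i, ∑ j, Ep i j = dr) ∧ (∀ j, ∑ i, Ep i j = dc) ∧
      ∀ e ∈ M, Ep e.1 e.2 = 0 := by
  classical
  -- degenerate cases
  rcases Nat.eq_zero_or_pos nc with hnc0 | hnc0
  · exact ⟨E, hE01, hrow, hcol, fun e _ => absurd e.2.2 (by omega)⟩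
  rcases Nat.eq_zero_or_pos nr with hnr0 | hnr0
  · exact ⟨E, hE01, hrow, hcol, fun e _ => absurd e.1.2 (by omega)⟩
  rcases Nat.eq_zero_or_pos p with hp0 | hp0
  · refine ⟨E, hE01, hrow, hcol, fun e he => ?_⟩
    exfalso
    have h3 : e ∈ M.filter (fun x => x.1 = e.1) := by
      rw [Finset.mem_filter]; exact ⟨he, rfl⟩
    have h4 := hMrow e.1
    have h5 : 0 < (M.filter (fun x => x.1 = e.1)).card := Finset.card_pos.mpr ⟨e, h3⟩
    omega
  rcases Nat.eq_zero_or_pos dr with hdr0 | hdr0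
  · -- all entries of E are zero
    have hE0 : ∀ i j, E i j = 0 := by
      intro i j
      have hnn : ∀ j', 0 ≤ E i j' := fun j' => by rcases hE01 i j' with h | h <;> simp [h]
      have hs : ∑ j', E i j' = 0 := by rw [hrow i, hdr0]; simp
      have := (Finset.sum_eq_zero_iff_of_nonneg (fun j' _ => hnn j')).mp hs
      exact this j (Finset.mem_univ j)
    exact ⟨E, hE01, hrow, hcol, fun e _ => hE0 e.1 e.2⟩
  -- main case
  have hnc3 : dr + 2 * p ≤ nc := by
    have : ((dr + 2 * p : ℕ) : ℝ) ≤ (nc : ℝ) := by push_cast; linarith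
    exact_mod_cast this
  have hsizeR : (nr : ℝ) * dr = (nc : ℝ) * dc := by
    have hR : ∑ i, ∑ j, E i j = (nr : ℝ) * dr := by
      rw [Finset.sum_congr rfl (fun i _ => hrow i)]
      rw [Finset.sum_const, Finset.card_univ, Fintype.card_fin, nsmul_eq_mul]
    have hC : ∑ i, ∑ j, E i j = (nc : ℝ) * dc := by
      rw [show ∑ i, ∑ j, E i j = ∑ j, ∑ i, E i j from Finset.sum_comm, Finset.sum_congr rfl (fun j _ => hcol j)]
      rw [Finset.sum_const, Finset.card_univ, Fintype.card_fin, nsmul_eq_mul]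
    rw [← hR, hC]
  have hsize : nr * dr = nc * dc := by exact_mod_cast hsizeR
  -- θc is nonnegative
  have hθc0 : 0 ≤ θc := by
    have hne : (⟨0, by omega⟩ : Fin nc) ≠ ⟨1, by omega⟩ := by
      intro h; rw [Fin.mk.injEq] at h; omega
    refine le_trans ?_ (hθc _ _ hne)
    apply Finset.sum_nonneg
    intro i _
    rcases hE01 i ⟨0, by omega⟩ with h | h <;> rcases hE01 i ⟨1, by omega⟩ with h' | h' <;>
      simp [h, h']
  -- the average bound on θc
  have hEsq : ∀ i j, E i j * E i j = E i j := by
    intro i j; rcases hE01 i j with h | h <;> rw [h] <;> ring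
  have hstar : (2 * (p : ℝ) - 1) * ((nc : ℝ) - 1) ≤ (dc : ℝ) * ((nc : ℝ) - dr) := by
    set j0 : Fin nc := ⟨0, by omega⟩ with hj0
    have key2 : ∑ j' ∈ Finset.univ.erase j0, (∑ i, E i j0 * E i j')
        = (dc : ℝ) * dr - dc := by
      have hall : ∑ j', (∑ i, E i j0 * E i j') = (dc : ℝ) * dr := by
        rw [Finset.sum_comm]
        have : ∀ i, ∑ j', E i j0 * E i j' = E i j0 * dr := by
          intro i
          rw [← Finset.mul_sum, hrow i]
        rw [Finset.sum_congr rfl (fun i _ => this i), ← Finset.sum_mul, hcol j0]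
      have hself : ∑ i, E i j0 * E i j0 = (dc : ℝ) := by
        rw [Finset.sum_congr rfl (fun i _ => hEsq i j0), hcol j0]
      have hsum : ∑ j' ∈ Finset.univ.erase j0, (∑ i, E i j0 * E i j')
          + ∑ i, E i j0 * E i j0 = ∑ j', ∑ i, E i j0 * E i j' :=
        Finset.sum_erase_add _ _ (Finset.mem_univ j0)
      linarith [hall, hself, hsum]
    have key1 : ∑ j' ∈ Finset.univ.erase j0, (∑ i, E i j0 * E i j')
        ≤ ((nc - 1 : ℕ) : ℝ) * θc := by
      have hcard : (Finset.univ.erase j0).card = nc - 1 := by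
        rw [Finset.card_erase_of_mem (Finset.mem_univ _), Finset.card_univ, Fintype.card_fin]
      calc ∑ j' ∈ Finset.univ.erase j0, (∑ i, E i j0 * E i j')
          ≤ (Finset.univ.erase j0).card • θc := by
            apply Finset.sum_le_card_nsmul
            intro j' hj'
            rw [Finset.mem_erase] at hj'
            exact hθc j0 j' (Ne.symm hj'.1)
        _ = ((nc - 1 : ℕ) : ℝ) * θc := by rw [hcard, nsmul_eq_mul]
    have hcast : ((nc - 1 : ℕ) : ℝ) = (nc : ℝ) - 1 := by
      rw [Nat.cast_sub hnc0]; norm_num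
    rw [hcast] at key1
    have hncR : (1 : ℝ) ≤ (nc : ℝ) := by exact_mod_cast hnc0
    nlinarith [key1, key2, h2, hncR]
  -- the cut condition
  have hcut : ∀ (A : Finset (Fin nr)) (B : Finset (Fin nc)),
      dr * A.card ≤ dc * B.card + ((A ×ˢ Bᶜ).filter (fun e => e ∉ M)).card := by
    intro A B
    set m : ℕ := ((A ×ˢ Bᶜ).filter (fun e => e ∈ M)).card with hm
    have hsplit : ((A ×ˢ Bᶜ).filter (fun e => e ∉ M)).card = A.card * Bᶜ.card - m := by
      have := Finset.card_filter_add_card_filter_not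
        (s := A ×ˢ Bᶜ) (p := fun e => e ∈ M)
      rw [Finset.card_product] at this
      omega
    have hm1 : m ≤ p * A.card := by
      have hsub : (A ×ˢ Bᶜ).filter (fun e => e ∈ M)
          ⊆ A.biUnion (fun i => M.filter (fun e => e.1 = i)) := by
        intro e he
        simp only [Finset.mem_filter, Finset.mem_product] at he
        rw [Finset.mem_biUnion]
        exact ⟨e.1, he.1.1, by rw [Finset.mem_filter]; exact ⟨he.2, rfl⟩⟩
      calc m ≤ (A.biUnion (fun i => M.filter (fun e => e.1 = i))).card :=
            Finset.card_le_card hsub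
        _ ≤ ∑ i ∈ A, (M.filter (fun e => e.1 = i)).card := Finset.card_biUnion_le
        _ ≤ ∑ _i ∈ A, p := Finset.sum_le_sum (fun i _ => hMrow i)
        _ = p * A.card := by rw [Finset.sum_const, smul_eq_mul, Nat.mul_comm]
    have hm2 : m ≤ p * Bᶜ.card := by
      have hsub : (A ×ˢ Bᶜ).filter (fun e => e ∈ M)
          ⊆ Bᶜ.biUnion (fun j => M.filter (fun e => e.2 = j)) := by
        intro e he
        simp only [Finset.mem_filter, Finset.mem_product] at he
        rw [Finset.mem_biUnion]
        exact ⟨e.2, he.1.2, by rw [Finset.mem_filter]; exact ⟨he.2, rfl⟩⟩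
      calc m ≤ (Bᶜ.biUnion (fun j => M.filter (fun e => e.2 = j))).card :=
            Finset.card_le_card hsub
        _ ≤ ∑ j ∈ Bᶜ, (M.filter (fun e => e.2 = j)).card := Finset.card_biUnion_le
        _ ≤ ∑ _j ∈ Bᶜ, p := Finset.sum_le_sum (fun j _ => hMcol j)
        _ = p * Bᶜ.card := by rw [Finset.sum_const, smul_eq_mul, Nat.mul_comm]
    have hm3 : m ≤ A.card * Bᶜ.card := by
      rw [← Finset.card_product]
      exact Finset.card_le_card (Finset.filter_subset _ _)
    have hBc : Bᶜ.card = nc - B.card := by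
      rw [Finset.card_compl, Fintype.card_fin]
    have hBle : B.card ≤ nc := by simpa using Finset.card_le_univ B
    have hAle : A.card ≤ nr := by simpa using Finset.card_le_univ A
    -- pass to the reals
    have key : (dr : ℝ) * A.card + m ≤ (A.card : ℝ) * Bᶜ.card + dc * ((nc : ℝ) - Bᶜ.card) := by
      apply cut_arith (p : ℝ) dr dc nr nc (A.card) (Bᶜ.card) m
      · exact_mod_cast hp0
      · exact_mod_cast hdr0
      · have : (2 * p : ℝ) - 1 ≤ (dc : ℝ) := by linarith [hθc0, h2]
        linarith
      · push_cast; linarith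
      · exact hsizeR
      · exact hstar
      · positivity
      · exact_mod_cast hAle
      · positivity
      · exact_mod_cast (by omega : Bᶜ.card ≤ nc)
      · positivity
      · exact_mod_cast hm1
      · exact_mod_cast hm2
      · exact_mod_cast hm3
    have hcastB : ((nc : ℝ) - Bᶜ.card) = (B.card : ℝ) := by
      rw [hBc]; push_cast [Nat.cast_sub hBle]; ring
    rw [hcastB] at key
    have final : (dr * A.card : ℝ) ≤ dc * B.card + ((A.card * Bᶜ.card - m : ℕ) : ℝ) := by
      rw [Nat.cast_sub hm3]
      push_cast
      linarith
    rw [← hsplit] at final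
    exact_mod_cast final
  exact exists_matrix_of_cut nr nc dr dc M hsize hcut
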